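/- Let D = {(i_1,j_1),…,(i_m,j_m)} be a set of domino pieces and write S_m(ē_{i_1 j_1},…,ē_{i_m j_m}) = Σ_{i ≤ j} α_{ij} ē_{ij} in the basis {ē_{ij} : i ≤ j} of symmetric matrices. Then for any a ≤ b, the coefficient α_{ab} is nonzero if and only if there exists a train using all the pieces of D that starts with a and ends with b (or vice versa). -/

import Mathlib

/-- `ē i j`: equals `e i j + e j i` for `i ≠ j` and `e i i` for `i = j`. -/
noncomputable def ebar (n : ℕ) (i j : Fin n) : Matrix (Fin n) (Fin n) ℝ :=
  if i = j then Matrix.single i i 1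
  else Matrix.single i j 1 + Matrix.single j i 1

/-- The product `A ∙ B = AB + BA` on `Mₙ(ℝ)`. -/
noncomputable def bullet {n : ℕ} (A B : Matrix (Fin n) (Fin n) ℝ) :
    Matrix (Fin n) (Fin n) ℝ := A * B + B * A

/-- The left-normed product `A₁ ∙ A₂ ∙ ⋯ ∙ Aᵣ = (A₁ ∙ ⋯ ∙ A_{r-1}) ∙ Aᵣ`. -/
noncomputable def leftnorm {n : ℕ} : List (Matrix (Fin n) (Fin n) ℝ) → Matrix (Fin n) (Fin n) ℝ
  | [] => 0
  | x :: xs => xs.foldl bullet x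

/-- `Sₘ(X₁,…,Xₘ) = Σ_{σ ∈ Sₘ} X_{σ(1)} ∙ ⋯ ∙ X_{σ(m)}` (left-normed products). -/
noncomputable def Sm {n : ℕ} (m : ℕ) (x : Fin m → Matrix (Fin n) (Fin n) ℝ) :
    Matrix (Fin n) (Fin n) ℝ :=
  ∑ σ : Equiv.Perm (Fin m), leftnorm (List.ofFn fun t => x (σ t))

/-- A train from `a` to `b` using the multiset `D` of domino pieces: a list of ordered
pairs `(a₁,b₁),…,(aₘ,bₘ)` with `bᵣ = a_{r+1}`, `a₁ = a`, `bₘ = b`, whose multiset of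
unordered pairs equals `D`. -/
def IsTrain {α : Type*} (D : Multiset (Sym2 α)) (a b : α) (L : List (α × α)) : Prop :=
  L.Chain' (fun p q => p.2 = q.1) ∧
  (L.map Prod.fst).head? = some a ∧
  (L.map Prod.snd).getLast? = some b ∧
  (↑(L.map Sym2.mk.uncurry) : Multiset (Sym2 α)) = D

/-! Auxiliary lemmas -/

open List in

open List in
theorem ofFn_perm_succAbove {γ : Type*} {m : ℕ} (g : Fin (m+1) → γ) (i : Fin (m+1)) :
    List.ofFn g ~ g i :: List.ofFn (g ∘ i.succAbove) := by
  induction m with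
  | zero =>
    have : i = 0 := Fin.fin_one_eq_zero i
    subst this
    simp [List.ofFn_succ]
  | succ m ih =>
    rcases Fin.eq_zero_or_eq_succ i with h | ⟨j, rfl⟩
    · subst h
      have : g ∘ Fin.succAbove 0 = fun t => g t.succ := by
        funext t; simp [Fin.zero_succAbove]
      rw [this, List.ofFn_succ]
    · rw [List.ofFn_succ]
      have h1 : List.ofFn (fun t : Fin (m+1) => g t.succ) ~
          g j.succ :: List.ofFn ((fun t : Fin (m+1) => g t.succ) ∘ j.succAbove) :=
        ih (fun t => g t.succ) j
      have h2 : g ∘ (j.succ).succAbove = Fin.cons (g 0)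
          ((fun t : Fin (m+1) => g t.succ) ∘ j.succAbove) := by
        funext t
        rcases Fin.eq_zero_or_eq_succ t with rfl | ⟨s, rfl⟩
        · simp [Fin.succ_succAbove_zero]
        · simp [Fin.succ_succAbove_succ]
      calc g 0 :: List.ofFn (fun t : Fin (m+1) => g t.succ)
          ~ g 0 :: (g j.succ :: List.ofFn ((fun t : Fin (m+1) => g t.succ) ∘ j.succAbove)) :=
            h1.cons _
        _ ~ g j.succ :: (g 0 :: List.ofFn ((fun t : Fin (m+1) => g t.succ) ∘ j.succAbove)) :=
            List.Perm.swap _ _ _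
        _ = g j.succ :: List.ofFn (g ∘ (j.succ).succAbove) := by
            rw [h2, List.ofFn_succ]
            rfl

theorem exists_perm_ofFn {γ : Type*} : ∀ {m : ℕ} (g : Fin m → γ) (l : List γ),
    List.Perm l (List.ofFn g) → ∃ σ : Equiv.Perm (Fin m), List.ofFn (g ∘ σ) = l
  | 0, g, l, h => by
    have : l = [] := List.Perm.eq_nil (by simpa using h)
    exact ⟨Equiv.refl _, by simp [this]⟩
  | (m+1), g, l, h => by
    have hl : l ≠ [] := by
      intro hnil; subst hnil
      have := h.length_eq; simp at this
    obtain ⟨c, l', rfl⟩ := List.exists_cons_of_ne_nil hl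
    have hc : c ∈ List.ofFn g := h.subset List.mem_cons_self
    obtain ⟨i, hi⟩ := List.mem_ofFn.mp hc
    have hperm : List.Perm (List.ofFn g) (g i :: List.ofFn (g ∘ i.succAbove)) := ofFn_perm_succAbove g i
    have h2 : (c :: l').Perm (g i :: List.ofFn (g ∘ i.succAbove)) := h.trans hperm
    rw [show c = g i from hi.symm] at h2
    have h3 : l'.Perm (List.ofFn (g ∘ i.succAbove)) := h2.cons_inv
    obtain ⟨σ', hσ'⟩ := exists_perm_ofFn (g ∘ i.succAbove) l' h3
    refine ⟨((finSuccEquiv' 0).trans (Equiv.optionCongr σ')).trans (finSuccEquiv' i).symm, ?_⟩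
    rw [List.ofFn_succ]
    have e0 : ∀ σ : Equiv.Perm (Fin m),
        ((((finSuccEquiv' (0 : Fin (m+1))).trans (Equiv.optionCongr σ)).trans
          (finSuccEquiv' i).symm) : Fin (m+1) → Fin (m+1)) 0 = i := by
      intro σ
      simp [finSuccEquiv'_at, finSuccEquiv'_symm_none]
    have e1 : ∀ t : Fin m,
        ((((finSuccEquiv' (0 : Fin (m+1))).trans (Equiv.optionCongr σ')).trans
          (finSuccEquiv' i).symm) : Fin (m+1) → Fin (m+1)) t.succ = i.succAbove (σ' t) := by
      intro t
      have hz : (0 : Fin (m+1)).succAbove t = t.succ := Fin.zero_succAbove t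
      have hfs : finSuccEquiv' (0 : Fin (m+1)) t.succ = some t := by
        rw [← hz]; exact finSuccEquiv'_succAbove 0 t
      simp [hfs, finSuccEquiv'_symm_some]
    refine congrArg₂ List.cons ?_ ?_
    · rw [Function.comp_apply, e0, hi]
    · rw [← hσ']
      refine congrArg List.ofFn ?_
      funext t
      rw [Function.comp_apply, Function.comp_apply, e1, Function.comp_apply]


section aux
variable {n : ℕ}

@[simp] theorem leftnorm_nil : leftnorm ([] : List (Matrix (Fin n) (Fin n) ℝ)) = 0 := rfl

theorem leftnorm_cons (x : Matrix (Fin n) (Fin n) ℝ) (xs : List (Matrix (Fin n) (Fin n) ℝ)) :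
    leftnorm (x :: xs) = xs.foldl bullet x := rfl

@[simp] theorem leftnorm_singleton (x : Matrix (Fin n) (Fin n) ℝ) : leftnorm [x] = x := rfl

theorem leftnorm_concat {l : List (Matrix (Fin n) (Fin n) ℝ)} (h : l ≠ [])
    (x : Matrix (Fin n) (Fin n) ℝ) : leftnorm (l ++ [x]) = bullet (leftnorm l) x := by
  cases l with
  | nil => exact absurd rfl h
  | cons y ys => simp [leftnorm_cons, List.foldl_append]

theorem std_apply (i j a b : Fin n) :
    Matrix.single i j (1 : ℝ) a b = if i = a ∧ j = b then 1 else 0 := rfl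

theorem ebar_apply_nonneg (i j a b : Fin n) : 0 ≤ ebar n i j a b := by
  unfold ebar
  split <;> simp only [Matrix.add_apply, std_apply] <;> split_ifs <;> norm_num

theorem ebar_symm (i j : Fin n) : ebar n i j = ebar n j i := by
  unfold ebar
  rcases eq_or_ne i j with rfl | h
  · simp
  · simp [h, h.symm, add_comm]

theorem sym2_of_ebar_ne_zero {i j a b : Fin n} (h : ebar n i j a b ≠ 0) :
    s(a, b) = s(i, j) := by
  unfold ebar at h
  rw [Sym2.eq_iff]
  split at h
  · next hij =>
    subst hij
    rw [std_apply] at h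
    split_ifs at h with hc
    · exact Or.inl ⟨hc.1.symm, hc.2.symm⟩
    · exact absurd rfl h
  · rw [Matrix.add_apply, std_apply, std_apply] at h
    split_ifs at h with h1 h2 h2
    · exact Or.inl ⟨h1.1.symm, h1.2.symm⟩
    · exact Or.inl ⟨h1.1.symm, h1.2.symm⟩
    · exact Or.inr ⟨h2.1.symm, h2.2.symm⟩
    · simp at h

theorem ebar_apply_self (i j : Fin n) : ebar n i j i j = 1 := by
  unfold ebar
  rcases eq_or_ne i j with rfl | h
  · simp [std_apply]
  · simp [h, Matrix.add_apply, std_apply, Ne.symm h]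

theorem ebar_apply_of_sym2 {i j a b : Fin n} (h : s(a, b) = s(i, j)) :
    ebar n i j a b = 1 := by
  rw [Sym2.eq_iff] at h
  rcases h with ⟨rfl, rfl⟩ | ⟨rfl, rfl⟩
  · exact ebar_apply_self a b
  · rw [ebar_symm]; exact ebar_apply_self a b

theorem mul_apply_nonneg {A B : Matrix (Fin n) (Fin n) ℝ}
    (hA : ∀ a b, 0 ≤ A a b) (hB : ∀ a b, 0 ≤ B a b) (a b : Fin n) : 0 ≤ (A * B) a b := by
  rw [Matrix.mul_apply]
  exact Finset.sum_nonneg fun k _ => mul_nonneg (hA a k) (hB k b)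

theorem leftnorm_nonneg (l : List (Matrix (Fin n) (Fin n) ℝ))
    (h : ∀ A ∈ l, ∀ a b, 0 ≤ A a b) : ∀ a b, 0 ≤ leftnorm l a b := by
  induction l using List.reverseRecOn with
  | nil => intro a b; simp
  | append_singleton l x ih =>
    have hx : ∀ a b, 0 ≤ x a b := h x (by simp)
    have hl : ∀ A ∈ l, ∀ a b, 0 ≤ A a b := fun A hA => h A (by simp [hA])
    cases l with
    | nil => simpa using hx
    | cons y ys =>
      intro a b
      rw [leftnorm_concat (by simp) x]
      unfold bullet
      rw [Matrix.add_apply]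
      exact add_nonneg
        (mul_apply_nonneg (ih hl) hx a b)
        (mul_apply_nonneg hx (ih hl) a b)

end aux

section trains
variable {n : ℕ}

/-- abbreviation -/
noncomputable def eb {n : ℕ} (p : Fin n × Fin n) : Matrix (Fin n) (Fin n) ℝ := ebar n p.1 p.2

theorem eb_nonneg (p : Fin n × Fin n) (a b : Fin n) : 0 ≤ eb p a b := ebar_apply_nonneg _ _ _ _

theorem leftnorm_map_nonneg (l : List (Fin n × Fin n)) (a b : Fin n) :
    0 ≤ leftnorm (l.map eb) a b :=
  leftnorm_nonneg _ (by rintro A hA; rw [List.mem_map] at hA; obtain ⟨p, -, rfl⟩ := hA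
                        exact eb_nonneg p) a b

theorem getLast?_snd {L : List (Fin n × Fin n)} {c : Fin n}
    (h : (L.map Prod.snd).getLast? = some c) : ∀ x ∈ L.getLast?, x.2 = c := by
  intro x hx
  rw [List.getLast?_map] at h
  rw [Option.mem_def] at hx
  rw [hx] at h
  simpa using h

theorem head?_fst {L : List (Fin n × Fin n)} {c : Fin n}
    (h : (L.map Prod.fst).head? = some c) : ∀ x ∈ L.head?, x.1 = c := by
  intro x hx
  rw [List.head?_map] at h
  rw [Option.mem_def] at hx
  rw [hx] at h
  simpa using h

theorem getLast?_cons' {β : Type*} (x : β) {l : List β} (h : l ≠ []) :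
    (x :: l).getLast? = l.getLast? := by
  cases l with
  | nil => simp at h
  | cons y ys => simp

theorem train_of_ne_zero : ∀ (l : List (Fin n × Fin n)) (a b : Fin n),
    leftnorm (l.map eb) a b ≠ 0 →
    ∃ L, IsTrain (↑(l.map Sym2.mk.uncurry) : Multiset (Sym2 (Fin n))) a b L := by
  intro l
  induction l using List.reverseRecOn with
  | nil => intro a b h; simp at h
  | append_singleton l p ih =>
    intro a b h
    cases l with
    | nil =>
      simp only [List.nil_append, List.map_cons, List.map_nil, leftnorm_singleton] at h
      have hs := sym2_of_ebar_ne_zero (i := p.1) (j := p.2) h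
      refine ⟨[(a, b)], List.isChain_singleton _, by simp, by simp, ?_⟩
      simp [hs]
      rfl
    | cons q l' =>
      rw [List.map_append, List.map_singleton,
        leftnorm_concat (by simp) (eb p)] at h
      unfold bullet at h
      rw [Matrix.add_apply] at h
      have hsplit : (leftnorm ((q :: l').map eb) * eb p) a b ≠ 0 ∨
          (eb p * leftnorm ((q :: l').map eb)) a b ≠ 0 := by
        by_contra hcon
        push_neg at hcon
        rw [hcon.1, hcon.2, add_zero] at h
        exact h rfl
      rcases hsplit with hne | hne
      · -- M * eb p
        rw [Matrix.mul_apply] at hne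
        obtain ⟨c, -, hc⟩ := Finset.exists_ne_zero_of_sum_ne_zero hne
        rcases mul_ne_zero_iff.mp hc with ⟨hM, hE⟩
        have hs := sym2_of_ebar_ne_zero (i := p.1) (j := p.2) hE
        obtain ⟨L, hch, hh, hl, hm⟩ := ih a c hM
        have hLne : L ≠ [] := by
          intro hnil; rw [hnil] at hh; simp at hh
        refine ⟨L ++ [(c, b)], ?_, ?_, ?_, ?_⟩
        · refine List.isChain_append.mpr ⟨hch, List.isChain_singleton _, ?_⟩
          intro x hx y hy
          simp only [List.head?_cons, Option.mem_def, Option.some.injEq] at hy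
          rw [← hy]
          exact getLast?_snd hl x hx
        · rw [List.map_append, List.head?_append_of_ne_nil _ (by simpa using hLne)]
          exact hh
        · rw [List.map_append, List.map_singleton, List.getLast?_concat]
        · have hs' : Sym2.mk.uncurry (c, b) = Sym2.mk.uncurry p := hs
          refine Multiset.coe_eq_coe.mpr ?_
          have e : q :: l' ++ [p] = (q :: l') ++ [p] := rfl
          rw [e, List.map_append, List.map_append, List.map_singleton, List.map_singleton, hs']
          exact (Multiset.coe_eq_coe.mp hm).append_right _
      · -- eb p * M
        rw [Matrix.mul_apply] at hne
        obtain ⟨c, -, hc⟩ := Finset.exists_ne_zero_of_sum_ne_zero hne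
        rcases mul_ne_zero_iff.mp hc with ⟨hE, hM⟩
        have hs := sym2_of_ebar_ne_zero (i := p.1) (j := p.2) hE
        obtain ⟨L, hch, hh, hl, hm⟩ := ih c b hM
        have hLne : L ≠ [] := by
          intro hnil; rw [hnil] at hh; simp at hh
        refine ⟨(a, c) :: L, ?_, ?_, ?_, ?_⟩
        · refine List.isChain_cons.mpr ⟨?_, hch⟩
          intro y hy
          exact (head?_fst hh y hy).symm
        · simp
        · rw [List.map_cons, getLast?_cons' _ (by simpa using hLne)]
          exact hl
        · have hs' : Sym2.mk.uncurry (a, c) = Sym2.mk.uncurry p := hs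
          refine Multiset.coe_eq_coe.mpr ?_
          have e : q :: l' ++ [p] = (q :: l') ++ [p] := rfl
          rw [e, List.map_append, List.map_cons, List.map_singleton, hs']
          exact ((List.perm_append_singleton _ _).symm).trans
            ((Multiset.coe_eq_coe.mp hm).append_right _)
end trains

section pos
variable {n : ℕ}

theorem leftnorm_pos_of_train : ∀ (L : List (Fin n × Fin n)) (a b : Fin n),
    L.Chain' (fun p q => p.2 = q.1) →
    (L.map Prod.fst).head? = some a →
    (L.map Prod.snd).getLast? = some b →
    0 < leftnorm (L.map eb) a b := by
  intro L
  induction L using List.reverseRecOn with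
  | nil => intro a b _ hh _; simp at hh
  | append_singleton L p ih =>
    intro a b hch hh hl
    have hb : p.2 = b := by
      rw [List.map_append, List.map_singleton, List.getLast?_concat] at hl
      simpa using hl
    cases L with
    | nil =>
      have ha : p.1 = a := by simpa using hh
      have : eb p a b = 1 := by
        rw [← ha, ← hb]
        exact ebar_apply_self p.1 p.2
      simp only [List.nil_append, List.map_cons, List.map_nil, leftnorm_singleton, this]
      norm_num
    | cons q L' =>
      obtain ⟨hch', -, hjun⟩ := List.isChain_append.mp hch
      have hne : (q :: L') ≠ ([] : List (Fin n × Fin n)) := by simp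
      have hlast : ((q :: L').map Prod.snd).getLast? = some p.1 := by
        rw [List.getLast?_map]
        rw [List.getLast?_eq_getLast_of_ne_nil hne]
        have := hjun ((q :: L').getLast hne)
          (by rw [List.getLast?_eq_getLast_of_ne_nil hne]; exact Option.mem_def.mpr rfl)
        simp only [List.head?_cons, Option.mem_def, Option.some.injEq] at this
        simp [this p rfl]
      have hh' : ((q :: L').map Prod.fst).head? = some a := by
        rw [List.map_append, List.head?_append_of_ne_nil _ (by simp)] at hh
        exact hh
      have hM : 0 < leftnorm ((q :: L').map eb) a p.1 := ih a p.1 hch' hh' hlast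
      rw [List.map_append, List.map_singleton, leftnorm_concat (by simp)]
      unfold bullet
      rw [Matrix.add_apply]
      have h2 : 0 ≤ (eb p * leftnorm ((q :: L').map eb)) a b :=
        mul_apply_nonneg (eb_nonneg p) (leftnorm_map_nonneg _) a b
      have h1 : 0 < (leftnorm ((q :: L').map eb) * eb p) a b := by
        rw [Matrix.mul_apply]
        have hE : eb p p.1 b = 1 := by rw [← hb]; exact ebar_apply_self p.1 p.2
        have hterm : 0 < leftnorm ((q :: L').map eb) a p.1 * eb p p.1 b := by
          rw [hE, mul_one]; exact hM
        refine lt_of_lt_of_le hterm ?_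
        refine Finset.single_le_sum (f := fun k => leftnorm ((q :: L').map eb) a k * eb p k b)
          (fun k _ => mul_nonneg (leftnorm_map_nonneg _ a k) (eb_nonneg p k b)) (Finset.mem_univ p.1)
      linarith
end pos

section symm
variable {n : ℕ}

theorem ebar_apply_comm (i j a b : Fin n) : ebar n i j a b = ebar n i j b a := by
  unfold ebar
  split
  · rw [std_apply, std_apply]
    simp only [and_comm]
  · rw [Matrix.add_apply, Matrix.add_apply, std_apply, std_apply, std_apply, std_apply]
    split_ifs <;> simp_all

theorem leftnorm_map_symm (l : List (Fin n × Fin n)) :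
    ∀ a b : Fin n, leftnorm (l.map eb) a b = leftnorm (l.map eb) b a := by
  induction l using List.reverseRecOn with
  | nil => intro a b; simp
  | append_singleton l p ih =>
    intro a b
    cases l with
    | nil =>
      simp only [List.nil_append, List.map_cons, List.map_nil, leftnorm_singleton]
      exact ebar_apply_comm p.1 p.2 a b
    | cons q l' =>
      rw [List.map_append, List.map_singleton, leftnorm_concat (by simp)]
      unfold bullet
      rw [Matrix.add_apply, Matrix.add_apply, Matrix.mul_apply, Matrix.mul_apply,
        Matrix.mul_apply, Matrix.mul_apply]
      have h1 : ∑ c, leftnorm ((q :: l').map eb) a c * eb p c b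
          = ∑ c, eb p b c * leftnorm ((q :: l').map eb) c a := by
        refine Finset.sum_congr rfl fun c _ => ?_
        rw [ih a c, show eb p c b = eb p b c from ebar_apply_comm p.1 p.2 c b, mul_comm]
      have h2 : ∑ c, eb p a c * leftnorm ((q :: l').map eb) c b
          = ∑ c, leftnorm ((q :: l').map eb) b c * eb p c a := by
        refine Finset.sum_congr rfl fun c _ => ?_
        rw [ih c b, show eb p a c = eb p c a from ebar_apply_comm p.1 p.2 a c, mul_comm]
      rw [h1, h2, add_comm]
end symm

section main
variable {n m : ℕ} (f : Fin m → Fin n × Fin n)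

theorem ofFn_map_eb (σ : Equiv.Perm (Fin m)) :
    (List.ofFn fun t => ebar n (f (σ t)).1 (f (σ t)).2) = (List.ofFn (f ∘ σ)).map eb := by
  rw [List.map_ofFn]
  rfl

theorem Sm_apply_eq (a b : Fin n) :
    Sm m (fun t => ebar n (f t).1 (f t).2) a b
      = ∑ σ : Equiv.Perm (Fin m), leftnorm ((List.ofFn (f ∘ σ)).map eb) a b := by
  unfold Sm
  rw [Matrix.sum_apply]
  exact Finset.sum_congr rfl fun σ _ => by rw [ofFn_map_eb]

theorem Sm_apply_symm (a b : Fin n) :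
    Sm m (fun t => ebar n (f t).1 (f t).2) a b = Sm m (fun t => ebar n (f t).1 (f t).2) b a := by
  rw [Sm_apply_eq, Sm_apply_eq]
  exact Finset.sum_congr rfl fun σ _ => leftnorm_map_symm _ a b

theorem Sm_ne_zero_iff (a b : Fin n) :
    Sm m (fun t => ebar n (f t).1 (f t).2) a b ≠ 0 ↔
      ∃ L, IsTrain (Finset.univ.val.map fun t => Sym2.mk.uncurry (f t)) a b L := by
  have hD : (Finset.univ.val.map fun t => Sym2.mk.uncurry (f t))
      = (↑(List.ofFn fun t => Sym2.mk.uncurry (f t)) : Multiset (Sym2 (Fin n))) :=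
    Fin.univ_val_map _
  constructor
  · intro h
    rw [Sm_apply_eq] at h
    obtain ⟨σ, -, hσ⟩ := Finset.exists_ne_zero_of_sum_ne_zero h
    obtain ⟨L, h1, h2, h3, h4⟩ := train_of_ne_zero (List.ofFn (f ∘ σ)) a b hσ
    refine ⟨L, h1, h2, h3, h4.trans ?_⟩
    rw [hD]
    rw [List.map_ofFn]
    refine Multiset.coe_eq_coe.mpr ?_
    exact Equiv.Perm.ofFn_comp_perm σ fun t => Sym2.mk.uncurry (f t)
  · rintro ⟨L, h1, h2, h3, h4⟩
    have hperm : List.Perm (L.map Sym2.mk.uncurry) (List.ofFn fun t => Sym2.mk.uncurry (f t)) :=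
      Multiset.coe_eq_coe.mp (h4.trans hD)
    obtain ⟨σ, hσ⟩ := exists_perm_ofFn (fun t => Sym2.mk.uncurry (f t)) (L.map Sym2.mk.uncurry) hperm
    have hlist : (List.ofFn (f ∘ σ)).map eb = L.map eb := by
      have hE2 : ∀ p : Fin n × Fin n,
          eb p = Sym2.lift ⟨fun i j => ebar n i j, fun i j => ebar_symm i j⟩ (Sym2.mk.uncurry p) :=
        fun p => by
          obtain ⟨i, j⟩ := p
          rw [Function.uncurry_apply_pair, Sym2.lift_mk]
          rfl
      calc (List.ofFn (f ∘ σ)).map eb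
          = ((List.ofFn (f ∘ σ)).map Sym2.mk.uncurry).map
              (Sym2.lift ⟨fun i j => ebar n i j, fun i j => ebar_symm i j⟩) := by
            rw [List.map_map]
            exact List.map_congr_left fun p _ => hE2 p
        _ = ((List.ofFn fun t => Sym2.mk.uncurry (f (σ t)))).map
              (Sym2.lift ⟨fun i j => ebar n i j, fun i j => ebar_symm i j⟩) := by
            rw [List.map_ofFn]; rfl
        _ = (L.map Sym2.mk.uncurry).map
              (Sym2.lift ⟨fun i j => ebar n i j, fun i j => ebar_symm i j⟩) := by
            rw [← hσ]; rfl
        _ = L.map eb := by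
            rw [List.map_map]
            exact List.map_congr_left fun p _ => (hE2 p).symm
    rw [Sm_apply_eq]
    have hpos : 0 < ∑ σ' : Equiv.Perm (Fin m), leftnorm ((List.ofFn (f ∘ σ')).map eb) a b := by
      refine Finset.sum_pos' (fun σ' _ => leftnorm_map_nonneg _ a b) ⟨σ, Finset.mem_univ σ, ?_⟩
      rw [hlist]
      exact leftnorm_pos_of_train L a b h1 h2 h3
    exact ne_of_gt hpos
end main

theorem ebar_apply_zero_of_ne {n : ℕ} {p : Fin n × Fin n} {a b : Fin n}
    (hp : p.1 ≤ p.2) (hab : a ≤ b) (hne : p ≠ (a, b)) : ebar n p.1 p.2 a b = 0 := by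
  by_contra h
  have hs := sym2_of_ebar_ne_zero h
  rw [Sym2.eq_iff] at hs
  rcases hs with ⟨h1, h2⟩ | ⟨h1, h2⟩
  · exact hne (Prod.ext h1.symm h2.symm)
  · have : p.1 = p.2 := le_antisymm hp (h2 ▸ h1 ▸ hab)
    refine hne (Prod.ext ?_ ?_)
    · rw [this, ← h1]
    · rw [← this, ← h2]


/-- Writing `Sₘ(ē_{i₁j₁},…,ē_{iₘjₘ}) = Σ_{i ≤ j} α i j • ē i j` in the basis
`{ē i j : i ≤ j}`, the coefficient `α a b` (for `a ≤ b`) is nonzero iff there is a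
train using all pieces of `D` starting with `a` and ending with `b`, or vice versa. -/
theorem coeff_ne_zero_iff_exists_train (n m : ℕ) (f : Fin m → Fin n × Fin n)
    (α : Fin n → Fin n → ℝ)
    (hα : Sm m (fun t => ebar n (f t).1 (f t).2) =
      ∑ p ∈ Finset.univ.filter (fun p : Fin n × Fin n => p.1 ≤ p.2),
        α p.1 p.2 • ebar n p.1 p.2)
    (a b : Fin n) (hab : a ≤ b) :
    α a b ≠ 0 ↔
      ((∃ L, IsTrain (Finset.univ.val.map fun t => Sym2.mk.uncurry (f t)) a b L) ∨
       (∃ L, IsTrain (Finset.univ.val.map fun t => Sym2.mk.uncurry (f t)) b a L)) := by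
  have hentry : α a b = Sm m (fun t => ebar n (f t).1 (f t).2) a b := by
    have h := congrFun (congrFun hα a) b
    rw [Matrix.sum_apply] at h
    rw [h]
    have : ∀ p ∈ Finset.univ.filter (fun p : Fin n × Fin n => p.1 ≤ p.2),
        p ≠ (a, b) → (α p.1 p.2 • ebar n p.1 p.2) a b = 0 := by
      intro p hp hne
      rw [Finset.mem_filter] at hp
      rw [Matrix.smul_apply, ebar_apply_zero_of_ne hp.2 hab hne, smul_zero]
    rw [Finset.sum_eq_single_of_mem (a, b)
      (Finset.mem_filter.mpr ⟨Finset.mem_univ _, hab⟩) this]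
    rw [Matrix.smul_apply, ebar_apply_self, smul_eq_mul, mul_one]
  rw [hentry]
  constructor
  · intro h
    exact Or.inl ((Sm_ne_zero_iff f a b).mp h)
  · rintro (h | h)
    · exact (Sm_ne_zero_iff f a b).mpr h
    · rw [Sm_apply_symm]
      exact (Sm_ne_zero_iff f b a).mpr h
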